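/- (Regression Kink Design.) For every m ∈ ℝ, 𝒫₁(m) is indistinguishable from 𝒫₀(m) in the weak distance: for every Q ∈ 𝒫 with μ(Q) ≠ m there exists a sequence {P_k} in 𝒫 with μ(P_k) = m and P_k →d Q. Consequently: (i) any test of H₀ : μ(P) = m that is a.s. continuous under every Q ∈ 𝒫₁(m) has power limited by size, and (ii) any confidence set for the kink μ obtained by inverting such nonrandomized tests that has confidence level 1−α > 0 is unbounded with strictly positive probability under every P ∈ 𝒫. -/

import Mathlib

open MeasureTheory Filter Set

/-- Membership in the class `𝒢`: `g` is bounded, continuous at every `x ≠ c`, with finite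
one-sided limits `gp = g(c+)` and `gm = g(c−)` at the cutoff `c`. -/
def JumpFun (c : ℝ) (g : ℝ → ℝ) (gp gm : ℝ) : Prop :=
  (∃ C, ∀ x, |g x| ≤ C) ∧ (∀ x : ℝ, x ≠ c → ContinuousAt g x) ∧
  Tendsto g (nhdsWithin c (Ioi c)) (nhds gp) ∧
  Tendsto g (nhdsWithin c (Iio c)) (nhds gm)

/-- The forcing variable `X = z.2` is continuously distributed with a continuous density `f`
and the cutoff `c` lies in the interior of the support of the density. -/
def XCont (c : ℝ) (P : ProbabilityMeasure (ℝ × ℝ)) (f : ℝ → ℝ) : Prop :=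
  Continuous f ∧ (∀ x, 0 ≤ f x) ∧
  (P : Measure (ℝ × ℝ)).map Prod.snd
    = MeasureTheory.volume.withDensity (fun x => ENNReal.ofReal (f x)) ∧
  c ∈ interior {x | 0 < f x}

/-- `E_P[Y | X] = g(X)` `P`-almost surely, expressed via the defining property of
conditional expectations, together with integrability of `Y = z.1`. -/
def CondMeanEq (P : ProbabilityMeasure (ℝ × ℝ)) (g : ℝ → ℝ) : Prop :=
  Integrable (fun z : ℝ × ℝ => z.1) (P : Measure (ℝ × ℝ)) ∧
  ∀ B : Set ℝ, MeasurableSet B →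
    ∫ z in {z : ℝ × ℝ | z.2 ∈ B}, z.1 ∂(P : Measure (ℝ × ℝ))
      = ∫ z in {z : ℝ × ℝ | z.2 ∈ B}, g z.2 ∂(P : Measure (ℝ × ℝ))

/-- The family `𝒫` of sharp RDD models: `(Y,X) ∼ P` with `X` continuously distributed,
`c` interior to its support, and conditional mean in the class `𝒢`. -/
def MemRDD (c : ℝ) (P : ProbabilityMeasure (ℝ × ℝ)) : Prop :=
  (∃ f, XCont c P f) ∧ ∃ g gp gm, JumpFun c g gp gm ∧ CondMeanEq P g

/-- Convergence in distribution: integrals of every bounded continuous function converge. -/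
def ConvDM {E : Type*} [MeasurableSpace E] [TopologicalSpace E]
    (P : ℕ → Measure E) (Q : Measure E) : Prop :=
  ∀ g : E → ℝ, Continuous g → (∃ C, ∀ x, |g x| ≤ C) →
    Tendsto (fun k => ∫ x, g x ∂ P k) atTop (nhds (∫ x, g x ∂ Q))

/-- The distribution of an i.i.d. sample of size `n` from `P`: the `n`-fold product measure. -/
noncomputable def sampleDist (n : ℕ) {E : Type*} [MeasurableSpace E]
    (P : ProbabilityMeasure E) : Measure (Fin n → E) :=
  Measure.pi fun _ => (P : Measure E)

/-- `E_P[φ]`, the rejection probability of the test `φ` under `P^{⊗n}`. -/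
noncomputable def tpower (n : ℕ) {E : Type*} [MeasurableSpace E]
    (P : ProbabilityMeasure E) (φ : (Fin n → E) → ℝ) : ℝ :=
  ∫ z, φ z ∂ sampleDist n P

/-- A test is a measurable function with values in `[0,1]`. -/
def IsTest {E : Type*} [MeasurableSpace E] (φ : E → ℝ) : Prop :=
  Measurable φ ∧ ∀ z, φ z ∈ Set.Icc (0:ℝ) 1

/-- `φ` is almost-surely continuous under `Q` (i.e. under `Q^{⊗n}`). -/
def ASCont {E : Type*} [MeasurableSpace E] [TopologicalSpace E] (n : ℕ)
    (Q : ProbabilityMeasure E) (φ : (Fin n → E) → ℝ) : Prop :=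
  sampleDist n Q {z | ¬ ContinuousAt φ z} = 0

/-- The family `𝒫` of Regression Kink Design models: `(Y,X) ∼ P` with `X` continuously
distributed, `c` interior to its support, and a conditional mean function whose derivative
away from `c` (on the support) lies in the class `𝒢`. -/
def MemRKD (c : ℝ) (P : ProbabilityMeasure (ℝ × ℝ)) : Prop :=
  ∃ f : ℝ → ℝ, XCont c P f ∧
    ∃ h : ℝ → ℝ, CondMeanEq P h ∧
      ∃ g gp gm, JumpFun c g gp gm ∧
        ∀ x ∈ interior {x | 0 < f x}, x ≠ c → HasDerivAt h (g x) x


noncomputable def sfun (t : ℝ) : ℝ := 1 - Real.exp (-(max t 0))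

lemma sfun_mem (t : ℝ) : sfun t ∈ Set.Icc (0:ℝ) 1 := by
  constructor
  · have h1 : Real.exp (-(max t 0)) ≤ 1 := by
      rw [Real.exp_le_one_iff]
      exact neg_nonpos.2 (le_max_right _ _)
    simp only [sfun]; linarith
  · have := Real.exp_pos (-(max t 0)); simp [sfun]; linarith

lemma sfun_continuous : Continuous sfun := by
  unfold sfun; fun_prop

lemma sfun_of_nonpos {t : ℝ} (ht : t ≤ 0) : sfun t = 0 := by
  simp [sfun, max_eq_right ht]

lemma sfun_of_pos {t : ℝ} (ht : 0 ≤ t) : sfun t = 1 - Real.exp (-t) := by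
  simp [sfun, max_eq_left ht]

noncomputable def psi (δ c : ℝ) (k : ℕ) (x : ℝ) : ℝ :=
  (δ / (k+1)) * sfun ((k+1) * (x - c))

noncomputable def gpsi (δ c : ℝ) (k : ℕ) (x : ℝ) : ℝ :=
  if c < x then δ * Real.exp (-((k+1) * (x - c))) else 0

lemma psi_continuous (δ c : ℝ) (k : ℕ) : Continuous (psi δ c k) := by
  unfold psi; exact continuous_const.mul (sfun_continuous.comp (by fun_prop))

lemma psi_abs_le (δ c : ℝ) (k : ℕ) (x : ℝ) : |psi δ c k x| ≤ |δ| / (k+1) := by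
  have h := sfun_mem ((k+1) * (x - c))
  rw [psi, abs_mul]
  have h1 : |sfun ((k+1) * (x - c))| ≤ 1 := abs_le.2 ⟨by linarith [h.1], h.2⟩
  have h2 : |δ / ((k:ℝ)+1)| = |δ| / (k+1) := by
    rw [abs_div, abs_of_pos (by positivity : (0:ℝ) < (k:ℝ)+1)]
  calc |δ / ((k:ℝ)+1)| * |sfun ((k+1) * (x - c))| ≤ |δ / ((k:ℝ)+1)| * 1 := by
        exact mul_le_mul_of_nonneg_left h1 (abs_nonneg _)
    _ = |δ| / (k+1) := by rw [mul_one, h2]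

lemma gpsi_abs_le (δ c : ℝ) (k : ℕ) (x : ℝ) : |gpsi δ c k x| ≤ |δ| := by
  rw [gpsi]
  split_ifs with h
  · rw [abs_mul, abs_of_pos (Real.exp_pos _)]
    calc |δ| * Real.exp (-((k+1) * (x - c))) ≤ |δ| * 1 := by
          exact mul_le_mul_of_nonneg_left (by rw [Real.exp_le_one_iff]; nlinarith) (abs_nonneg _)
      _ = |δ| := mul_one _
  · simp

lemma psi_hasDerivAt (δ c : ℝ) (k : ℕ) {x : ℝ} (hx : x ≠ c) :
    HasDerivAt (psi δ c k) (gpsi δ c k x) x := by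
  rcases lt_or_gt_of_ne hx with h | h
  · -- x < c : psi is 0 near x
    have hev : psi δ c k =ᶠ[nhds x] (fun _ => (0:ℝ)) := by
      filter_upwards [Iio_mem_nhds h] with y hy
      have : ((k:ℝ)+1) * (y - c) ≤ 0 := by
        have : y - c < 0 := sub_neg.2 (Set.mem_Iio.1 hy)
        nlinarith [Nat.cast_nonneg (α := ℝ) k]
      simp [psi, sfun_of_nonpos this]
    have h0 : gpsi δ c k x = 0 := by simp [gpsi, not_lt_of_gt h]
    rw [h0]
    exact (hasDerivAt_const x (0:ℝ)).congr_of_eventuallyEq hev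
  · -- c < x
    have hev : psi δ c k =ᶠ[nhds x]
        (fun y => (δ / (k+1)) * (1 - Real.exp (-((k+1) * (y - c))))) := by
      filter_upwards [Ioi_mem_nhds h] with y hy
      have : (0:ℝ) ≤ ((k:ℝ)+1) * (y - c) := by
        have : 0 ≤ y - c := le_of_lt (sub_pos.2 hy); positivity
      simp [psi, sfun_of_pos this]
    have hD : HasDerivAt (fun y => (δ / (k+1)) * (1 - Real.exp (-((k+1) * (y - c)))))
        (gpsi δ c k x) x := by
      have hin : HasDerivAt (fun y : ℝ => -((((k:ℝ))+1) * (y - c))) (-((k:ℝ)+1)) x := by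
        have : HasDerivAt (fun y : ℝ => y - c) 1 x := (hasDerivAt_id x).sub_const c
        exact (this.const_mul (((k:ℝ))+1)).neg.congr_deriv (by ring)
      have hexp := hin.exp
      have := ((hasDerivAt_const x (1:ℝ)).sub hexp).const_mul (δ / ((k:ℝ)+1))
      refine this.congr_deriv ?_
      have hk : ((k:ℝ)+1) ≠ 0 := by positivity
      simp [gpsi, h]
      field_simp
      ring
    exact hD.congr_of_eventuallyEq hev

lemma gpsi_continuousAt (δ c : ℝ) (k : ℕ) {x : ℝ} (hx : x ≠ c) :
    ContinuousAt (gpsi δ c k) x := by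
  rcases lt_or_gt_of_ne hx with h | h
  · have hev : gpsi δ c k =ᶠ[nhds x] (fun _ => (0:ℝ)) := by
      filter_upwards [Iio_mem_nhds h] with y hy
      simp [gpsi, not_lt_of_gt (Set.mem_Iio.1 hy)]
    exact ContinuousAt.congr continuousAt_const hev.symm
  · have hev : gpsi δ c k =ᶠ[nhds x]
        (fun y => δ * Real.exp (-((k+1) * (y - c)))) := by
      filter_upwards [Ioi_mem_nhds h] with y hy
      simp [gpsi, Set.mem_Ioi.1 hy]
    exact ContinuousAt.congr (by fun_prop) hev.symm

lemma gpsi_tendsto_right (δ c : ℝ) (k : ℕ) :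
    Tendsto (gpsi δ c k) (nhdsWithin c (Ioi c)) (nhds δ) := by
  have h1 : Tendsto (fun y => δ * Real.exp (-((k+1) * (y - c))))
      (nhdsWithin c (Ioi c)) (nhds δ) := by
    have hc : ContinuousAt (fun y : ℝ => δ * Real.exp (-(((k:ℝ)+1) * (y - c)))) c := by fun_prop
    have := hc.continuousWithinAt (s := Ioi c)
    simpa using this.tendsto
  refine h1.congr' ?_
  filter_upwards [self_mem_nhdsWithin] with y hy
  rw [gpsi, if_pos (Set.mem_Ioi.1 hy)]

lemma gpsi_tendsto_left (δ c : ℝ) (k : ℕ) :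
    Tendsto (gpsi δ c k) (nhdsWithin c (Iio c)) (nhds 0) := by
  have h1 : Tendsto (fun _ : ℝ => (0:ℝ)) (nhdsWithin c (Iio c)) (nhds 0) := tendsto_const_nhds
  refine h1.congr' ?_
  filter_upwards [self_mem_nhdsWithin] with y hy
  rw [gpsi, if_neg (not_lt_of_gt (Set.mem_Iio.1 hy))]

lemma psi_tendsto_zero (δ c : ℝ) (x : ℝ) :
    Tendsto (fun k : ℕ => psi δ c k x) atTop (nhds 0) := by
  have hb : Tendsto (fun k : ℕ => |δ| / ((k:ℝ)+1)) atTop (nhds 0) := by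
    apply Tendsto.div_atTop (tendsto_const_nhds)
    exact tendsto_atTop_add_const_right _ 1 tendsto_natCast_atTop_atTop
  refine squeeze_zero_norm (fun k => ?_) hb
  simpa [Real.norm_eq_abs] using psi_abs_le δ c k x

/-- A function continuous on an open set, extended by 0, is measurable. -/
lemma measurable_indicator_of_continuousOn {V : Set ℝ} (hV : IsOpen V) {h : ℝ → ℝ}
    (hc : ContinuousOn h V) : Measurable (V.indicator h) := by
  apply measurable_of_isOpen
  intro W hW
  by_cases h0 : (0:ℝ) ∈ W
  · have he : V.indicator h ⁻¹' W = (V ∩ h ⁻¹' W) ∪ Vᶜ := by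
      ext x
      by_cases hx : x ∈ V <;> simp [Set.indicator, hx, h0]
    rw [he]
    exact ((hc.isOpen_inter_preimage hV hW).measurableSet).union hV.measurableSet.compl
  · have he : V.indicator h ⁻¹' W = V ∩ h ⁻¹' W := by
      ext x
      by_cases hx : x ∈ V <;> simp [Set.indicator, hx, h0]
    rw [he]
    exact (hc.isOpen_inter_preimage hV hW).measurableSet

/-- If a measurable `H∘snd` satisfies the conditional-mean identity with an integrable `Y`,
then `H∘snd` is integrable. -/
lemma integrable_of_condmean {ρ : Measure (ℝ × ℝ)} [IsProbabilityMeasure ρ]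
    {H : ℝ → ℝ} (hH : Measurable H)
    (hY : Integrable (fun z : ℝ × ℝ => z.1) ρ)
    (hid : ∀ B : Set ℝ, MeasurableSet B →
      ∫ z in {z : ℝ × ℝ | z.2 ∈ B}, z.1 ∂ρ = ∫ z in {z : ℝ × ℝ | z.2 ∈ B}, H z.2 ∂ρ) :
    Integrable (fun z : ℝ × ℝ => H z.2) ρ := by
  set u : ℝ × ℝ → ℝ := fun z => H z.2 with hu
  have hum : Measurable u := hH.comp measurable_snd
  set C₀ : ℝ := ∫ z : ℝ × ℝ, |z.1| ∂ρ with hC₀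
  have hC₀nn : 0 ≤ C₀ := integral_nonneg fun _ => abs_nonneg _
  -- generic bound on one-signed truncations
  have key : ∀ (σ : ℝ) (_ : σ = 1 ∨ σ = -1) (M : ℕ),
      ∫⁻ z in {z : ℝ × ℝ | σ * u z ∈ Icc (0:ℝ) M}, ENNReal.ofReal (σ * u z) ∂ρ
        ≤ ENNReal.ofReal C₀ := by
    intro σ hσ M
    set B : Set ℝ := {x | σ * H x ∈ Icc (0:ℝ) M} with hB
    have hBm : MeasurableSet B := (measurable_const.mul hH) measurableSet_Icc
    set S : Set (ℝ × ℝ) := {z : ℝ × ℝ | z.2 ∈ B} with hS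
    have hSm : MeasurableSet S := measurable_snd hBm
    have hSeq : {z : ℝ × ℝ | σ * u z ∈ Icc (0:ℝ) M} = S := rfl
    rw [hSeq]
    -- u is bounded on S, hence integrable there
    have hub : ∀ z ∈ S, ‖σ * u z‖ ≤ (M:ℝ) := by
      intro z hz
      have h1 : σ * u z ∈ Icc (0:ℝ) M := hz
      rw [Real.norm_eq_abs, abs_of_nonneg h1.1]; exact h1.2
    have hui : IntegrableOn (fun z => σ * u z) S ρ := by
      refine Integrable.mono' (integrable_const (M:ℝ))
        ((measurable_const.mul hum).aestronglyMeasurable) ?_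
      exact ae_restrict_of_forall_mem hSm hub
    have hnn : 0 ≤ᵐ[ρ.restrict S] fun z => σ * u z :=
      ae_restrict_of_forall_mem hSm fun z hz => (hz : σ * u z ∈ Icc (0:ℝ) M).1
    have heq := ofReal_integral_eq_lintegral_ofReal hui hnn
    rw [← heq]
    apply ENNReal.ofReal_le_ofReal
    have h2 : ∫ z in S, σ * u z ∂ρ = σ * ∫ z in S, u z ∂ρ := integral_const_mul σ _
    have h3 : ∫ z in S, u z ∂ρ = ∫ z in S, z.1 ∂ρ := (hid B hBm).symm
    have h4 : σ * ∫ z in S, z.1 ∂ρ ≤ C₀ := by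
      have habs : ∀ s : Set (ℝ × ℝ), |∫ z in s, z.1 ∂ρ| ≤ C₀ := by
        intro s
        calc |∫ z in s, z.1 ∂ρ| ≤ ∫ z in s, |z.1| ∂ρ := by
              simpa [Real.norm_eq_abs] using
                norm_integral_le_integral_norm (μ := ρ.restrict s) (f := fun z : ℝ × ℝ => z.1)
          _ ≤ C₀ := setIntegral_le_integral hY.abs (ae_of_all _ fun z => abs_nonneg _)
      rcases hσ with rfl | rfl
      · simpa using le_trans (le_abs_self _) (habs S)
      · simpa using le_trans (neg_le_abs _) (habs S)
    rw [h2, h3]; exact h4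
  -- now assemble
  refine ⟨hum.aestronglyMeasurable, ?_⟩
  rw [hasFiniteIntegral_iff_norm]
  have hsplit : ∀ z : ℝ × ℝ, ENNReal.ofReal ‖u z‖
      = ENNReal.ofReal (u z) + ENNReal.ofReal (-u z) := by
    intro z
    rcases le_total 0 (u z) with h | h
    · have h1 : ENNReal.ofReal (-u z) = 0 := ENNReal.ofReal_of_nonpos (neg_nonpos.2 h)
      rw [Real.norm_eq_abs, abs_of_nonneg h, h1, add_zero]
    · have h1 : ENNReal.ofReal (u z) = 0 := ENNReal.ofReal_of_nonpos h
      rw [Real.norm_eq_abs, abs_of_nonpos h, h1, zero_add]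
  calc ∫⁻ z, ENNReal.ofReal ‖u z‖ ∂ρ
      = ∫⁻ z, (ENNReal.ofReal (u z) + ENNReal.ofReal (-u z)) ∂ρ := by
        exact lintegral_congr fun z => hsplit z
    _ = ∫⁻ z, ENNReal.ofReal (u z) ∂ρ + ∫⁻ z, ENNReal.ofReal (-u z) ∂ρ := by
        exact lintegral_add_left (by exact hum.ennreal_ofReal) _
    _ < ⊤ := by
        have hone : ∀ (σ : ℝ) (_ : σ = 1 ∨ σ = -1),
            ∫⁻ z, ENNReal.ofReal (σ * u z) ∂ρ ≤ ENNReal.ofReal C₀ := by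
          intro σ hσ
          have hmono : Monotone (fun (M : ℕ) (z : ℝ × ℝ) =>
              ({z : ℝ × ℝ | σ * u z ∈ Icc (0:ℝ) M}).indicator
                (fun z => ENNReal.ofReal (σ * u z)) z) := by
            intro M N hMN z
            simp only
            by_cases hz : z ∈ {z : ℝ × ℝ | σ * u z ∈ Icc (0:ℝ) M}
            · have hz' : z ∈ {z : ℝ × ℝ | σ * u z ∈ Icc (0:ℝ) N} := by
                rcases hz with ⟨h1, h2⟩
                exact ⟨h1, le_trans h2 (by exact_mod_cast hMN)⟩
              rw [Set.indicator_of_mem hz, Set.indicator_of_mem hz']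
            · rw [Set.indicator_of_notMem hz]; exact zero_le
          have hmeasM : ∀ M : ℕ, Measurable (fun z : ℝ × ℝ =>
              ({z : ℝ × ℝ | σ * u z ∈ Icc (0:ℝ) M}).indicator
                (fun z => ENNReal.ofReal (σ * u z)) z) := by
            intro M
            exact ((measurable_const.mul hum).ennreal_ofReal).indicator
              ((measurable_const.mul hum) measurableSet_Icc)
          have hsup : ∀ z : ℝ × ℝ, (⨆ M : ℕ,
              ({z : ℝ × ℝ | σ * u z ∈ Icc (0:ℝ) M}).indicator
                (fun z => ENNReal.ofReal (σ * u z)) z) = ENNReal.ofReal (σ * u z) := by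
            intro z
            rcases le_total 0 (σ * u z) with h | h
            · obtain ⟨M, hM⟩ := exists_nat_ge (σ * u z)
              apply le_antisymm
              · refine iSup_le fun N => ?_
                by_cases hz : z ∈ {z : ℝ × ℝ | σ * u z ∈ Icc (0:ℝ) N}
                · rw [Set.indicator_of_mem hz]
                · rw [Set.indicator_of_notMem hz]; exact zero_le
              · refine le_trans ?_ (le_iSup _ M)
                rw [Set.indicator_of_mem (by exact ⟨h, hM⟩)]
            · have h0 : ENNReal.ofReal (σ * u z) = 0 := ENNReal.ofReal_of_nonpos h
              rw [h0]
              simp only [le_antisymm_iff]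
              constructor
              · refine iSup_le fun N => ?_
                by_cases hz : z ∈ {z : ℝ × ℝ | σ * u z ∈ Icc (0:ℝ) N}
                · rw [Set.indicator_of_mem hz, h0]
                · rw [Set.indicator_of_notMem hz]
              · exact zero_le
          calc ∫⁻ z, ENNReal.ofReal (σ * u z) ∂ρ
              = ∫⁻ z, ⨆ M : ℕ, ({z : ℝ × ℝ | σ * u z ∈ Icc (0:ℝ) M}).indicator
                  (fun z => ENNReal.ofReal (σ * u z)) z ∂ρ := by
                exact (lintegral_congr fun z => (hsup z).symm)
            _ = ⨆ M : ℕ, ∫⁻ z, ({z : ℝ × ℝ | σ * u z ∈ Icc (0:ℝ) M}).indicator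
                  (fun z => ENNReal.ofReal (σ * u z)) z ∂ρ := lintegral_iSup hmeasM hmono
            _ ≤ ENNReal.ofReal C₀ := by
                refine iSup_le fun M => ?_
                have hSm' : MeasurableSet {z : ℝ × ℝ | σ * u z ∈ Icc (0:ℝ) M} :=
                  (measurable_const.mul hum) measurableSet_Icc
                rw [lintegral_indicator hSm']
                exact key σ hσ M
        have h1 := hone 1 (Or.inl rfl)
        have h2 := hone (-1) (Or.inr rfl)
        simp only [one_mul, neg_one_mul] at h1 h2
        calc ∫⁻ z, ENNReal.ofReal (u z) ∂ρ + ∫⁻ z, ENNReal.ofReal (-u z) ∂ρ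
            ≤ ENNReal.ofReal C₀ + ENNReal.ofReal C₀ := add_le_add h1 h2
          _ < ⊤ := by simp [ENNReal.add_lt_top]


/-- The perturbation map on `ℝ × ℝ`. -/
noncomputable def Tmap (δ c : ℝ) (k : ℕ) (z : ℝ × ℝ) : ℝ × ℝ :=
  (z.1 + psi δ c k z.2, z.2)

lemma Tmap_continuous (δ c : ℝ) (k : ℕ) : Continuous (Tmap δ c k) :=
  (continuous_fst.add ((psi_continuous δ c k).comp continuous_snd)).prodMk continuous_snd

lemma Tmap_measurable (δ c : ℝ) (k : ℕ) : Measurable (Tmap δ c k) :=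
  (Tmap_continuous δ c k).measurable

lemma Tmap_snd (δ c : ℝ) (k : ℕ) : Prod.snd ∘ Tmap δ c k = Prod.snd := rfl

lemma Tmap_preimage (δ c : ℝ) (k : ℕ) (B : Set ℝ) :
    Tmap δ c k ⁻¹' {z : ℝ × ℝ | z.2 ∈ B} = {z : ℝ × ℝ | z.2 ∈ B} := rfl

/-- Integrability of a bounded measurable function against a probability measure. -/
lemma integrable_of_bounded {E : Type*} [MeasurableSpace E] {ρ : Measure E}
    [IsProbabilityMeasure ρ] {f : E → ℝ} (hm : AEStronglyMeasurable f ρ)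
    {C : ℝ} (hb : ∀ z, |f z| ≤ C) : Integrable f ρ :=
  Integrable.mono' (integrable_const C) hm
    (ae_of_all _ fun z => by rw [Real.norm_eq_abs]; exact hb z)

section Pimap
variable {E : Type*} [MeasurableSpace E]

/-- Product of pushforwards is the pushforward of the product under the coordinatewise map. -/
lemma pi_map_eq (n : ℕ) (ρ : Measure E) [IsProbabilityMeasure ρ] {T : E → E}
    (hT : Measurable T) :
    Measure.pi (fun _ : Fin n => ρ.map T)
      = (Measure.pi fun _ : Fin n => ρ).map (fun z (i : Fin n) => T (z i)) := by
  haveI : IsProbabilityMeasure (ρ.map T) := Measure.isProbabilityMeasure_map hT.aemeasurable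
  have hF : Measurable (fun (z : Fin n → E) (i : Fin n) => T (z i)) :=
    measurable_pi_lambda _ fun i => hT.comp (measurable_pi_apply i)
  refine Measure.pi_eq fun s hs => ?_
  rw [Measure.map_apply hF (MeasurableSet.univ_pi hs)]
  have hpre : (fun (z : Fin n → E) (i : Fin n) => T (z i)) ⁻¹' (Set.pi univ s)
      = Set.pi univ (fun i => T ⁻¹' s i) := by
    ext z; simp [Set.mem_pi]
  rw [hpre, Measure.pi_pi]
  exact Finset.prod_congr rfl fun i _ => (Measure.map_apply hT (hs i)).symm

end Pimap

/-- Key convergence: rejection probabilities under the perturbed product measures converge. -/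
lemma tendsto_tpower_of_ascont (n : ℕ) (δ c : ℝ) (Q : ProbabilityMeasure (ℝ × ℝ))
    (φ : (Fin n → ℝ × ℝ) → ℝ) (hφm : Measurable φ) (hφb : ∀ z, |φ z| ≤ 1)
    (hac : sampleDist n Q {z | ¬ ContinuousAt φ z} = 0) :
    Tendsto (fun k => tpower n (Q.map (Tmap_measurable δ c k).aemeasurable) φ) atTop
      (nhds (tpower n Q φ)) := by
  have hmain : ∀ k, tpower n (Q.map (Tmap_measurable δ c k).aemeasurable) φ
      = ∫ z, φ (fun i => Tmap δ c k (z i)) ∂ sampleDist n Q := by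
    intro k
    have hF : Measurable (fun (z : Fin n → ℝ × ℝ) (i : Fin n) => Tmap δ c k (z i)) :=
      measurable_pi_lambda _ fun i => (Tmap_measurable δ c k).comp (measurable_pi_apply i)
    rw [tpower, sampleDist]
    have hco : (fun _ : Fin n => ((Q.map (Tmap_measurable δ c k).aemeasurable : ProbabilityMeasure (ℝ × ℝ)) : Measure (ℝ × ℝ)))
        = fun _ : Fin n => ((Q : Measure (ℝ × ℝ)).map (Tmap δ c k)) := by
      funext i; exact Q.toMeasure_map (Tmap_measurable δ c k).aemeasurable
    rw [hco, pi_map_eq n (Q : Measure (ℝ × ℝ)) (Tmap_measurable δ c k)]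
    rw [integral_map hF.aemeasurable hφm.aestronglyMeasurable]
    rfl
  simp only [hmain]
  haveI : IsProbabilityMeasure (sampleDist n Q) := by
    rw [sampleDist]; infer_instance
  rw [tpower]
  refine tendsto_integral_of_dominated_convergence (fun _ => (1:ℝ)) ?_ (integrable_const 1) ?_ ?_
  · intro k
    exact (hφm.comp (measurable_pi_lambda _ fun i =>
      (Tmap_measurable δ c k).comp (measurable_pi_apply i))).aestronglyMeasurable
  · intro k
    exact ae_of_all _ fun z => by rw [Real.norm_eq_abs]; exact hφb _
  · have hae : ∀ᵐ z ∂ sampleDist n Q, ContinuousAt φ z := by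
      rw [ae_iff]; exact hac
    filter_upwards [hae] with z hz
    have hTz : Tendsto (fun k => fun i => Tmap δ c k (z i)) atTop (nhds z) := by
      rw [tendsto_pi_nhds]
      intro i
      rw [Prod.tendsto_iff]
      constructor
      · simpa [Tmap] using (tendsto_const_nhds (x := (z i).1)).add (psi_tendsto_zero δ c (z i).2)
      · exact tendsto_const_nhds
    exact (hz.tendsto).comp hTz


/-- Master construction: perturbing `Q ∈ 𝒫` by a vanishing kink of size `δ` chosen so that
the kink of the perturbed model is exactly `m`. -/
lemma master_construction (n : ℕ) (c m : ℝ) (μ : ProbabilityMeasure (ℝ × ℝ) → ℝ)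
    (hμ : ∀ (P : ProbabilityMeasure (ℝ × ℝ)) (f h g : ℝ → ℝ) (gp gm : ℝ),
      XCont c P f → CondMeanEq P h → JumpFun c g gp gm →
      (∀ x ∈ interior {x | 0 < f x}, x ≠ c → HasDerivAt h (g x) x) →
      μ P = gp - gm)
    (Q : ProbabilityMeasure (ℝ × ℝ)) (hQ : MemRKD c Q) :
    ∃ P : ℕ → ProbabilityMeasure (ℝ × ℝ),
      (∀ k, MemRKD c (P k) ∧ μ (P k) = m) ∧
      ConvDM (fun k => ((P k : Measure (ℝ × ℝ)))) (Q : Measure (ℝ × ℝ)) ∧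
      ∀ φ : (Fin n → ℝ × ℝ) → ℝ, Measurable φ → (∀ z, |φ z| ≤ 1) →
        sampleDist n Q {z | ¬ ContinuousAt φ z} = 0 →
        Tendsto (fun k => tpower n (P k) φ) atTop (nhds (tpower n Q φ)) := by
  obtain ⟨f, hX, h, hCM, g, gp, gm, hJ, hD⟩ := hQ
  set ρ : Measure (ℝ × ℝ) := (Q : Measure (ℝ × ℝ)) with hρ
  set δ : ℝ := m - (gp - gm) with hδ
  set U : Set ℝ := {x | 0 < f x} with hU
  have hUopen : IsOpen U := isOpen_lt continuous_const hX.1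
  have hUint : interior {x | 0 < f x} = U := hUopen.interior_eq
  set V : Set ℝ := U \ {c} with hV
  have hVopen : IsOpen V := hUopen.sdiff isClosed_singleton
  have hcontV : ContinuousOn h V := by
    intro x hx
    exact ((hD x (by rw [hUint]; exact hx.1) hx.2).continuousAt).continuousWithinAt
  set h₀ : ℝ → ℝ := V.indicator h with hh₀
  have h₀meas : Measurable h₀ := measurable_indicator_of_continuousOn hVopen hcontV
  -- a.e. the second coordinate lies in V
  have haeV : ∀ᵐ z ∂ρ, z.2 ∈ V := by
    rw [ae_iff]
    have hpre : {z : ℝ × ℝ | ¬ z.2 ∈ V} = Prod.snd ⁻¹' Vᶜ := rfl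
    rw [hpre, ← Measure.map_apply measurable_snd hVopen.measurableSet.compl, hX.2.2.1]
    rw [withDensity_apply _ hVopen.measurableSet.compl]
    have hsub : Vᶜ ⊆ Uᶜ ∪ {c} := by
      intro x hx
      by_cases hc : x = c
      · exact Or.inr hc
      · left; intro hxU; exact hx ⟨hxU, hc⟩
    refine le_antisymm (le_trans (lintegral_mono_set hsub) ?_) zero_le
    refine le_trans (lintegral_union_le _ _ _) ?_
    have h1 : ∫⁻ x in Uᶜ, ENNReal.ofReal (f x) ∂volume = 0 := by
      have : ∀ᵐ x ∂(volume.restrict Uᶜ), ENNReal.ofReal (f x) = 0 := by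
        refine ae_restrict_of_forall_mem hUopen.measurableSet.compl fun x hx => ?_
        have : ¬ 0 < f x := hx
        exact ENNReal.ofReal_eq_zero.2 (le_of_not_gt this)
      calc ∫⁻ x in Uᶜ, ENNReal.ofReal (f x) ∂volume = ∫⁻ _ in Uᶜ, 0 ∂volume :=
            lintegral_congr_ae this
        _ = 0 := lintegral_zero
    have h2 : ∫⁻ x in ({c} : Set ℝ), ENNReal.ofReal (f x) ∂volume = 0 :=
      setLIntegral_measure_zero _ _ (measure_singleton c)
    rw [h1, h2, add_zero]
  -- conditional mean identity for the measurable version `h₀`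
  have hCM₀ : ∀ B : Set ℝ, MeasurableSet B →
      ∫ z in {z : ℝ × ℝ | z.2 ∈ B}, z.1 ∂ρ = ∫ z in {z : ℝ × ℝ | z.2 ∈ B}, h₀ z.2 ∂ρ := by
    intro B hB
    rw [hCM.2 B hB]
    refine integral_congr_ae ?_
    refine ae_restrict_of_ae ?_
    filter_upwards [haeV] with z hz
    rw [hh₀, Set.indicator_of_mem hz]
  have hint : Integrable (fun z : ℝ × ℝ => h₀ z.2) ρ :=
    integrable_of_condmean h₀meas hCM.1 hCM₀
  -- the perturbed measures
  refine ⟨fun k => Q.map (Tmap_measurable δ c k).aemeasurable, ?_, ?_, ?_⟩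
  · intro k
    have hcoe : ((Q.map (Tmap_measurable δ c k).aemeasurable : ProbabilityMeasure (ℝ × ℝ)) :
        Measure (ℝ × ℝ)) = ρ.map (Tmap δ c k) :=
      Q.toMeasure_map (Tmap_measurable δ c k).aemeasurable
    have hψint : Integrable (fun z : ℝ × ℝ => psi δ c k z.2) ρ :=
      integrable_of_bounded (((psi_continuous δ c k).comp continuous_snd).aestronglyMeasurable)
        (fun z => psi_abs_le δ c k z.2)
    set h' : ℝ → ℝ := fun x => h₀ x + psi δ c k x with hh'
    have h'meas : Measurable h' := h₀meas.add (psi_continuous δ c k).measurable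
    -- XCont
    have hXk : XCont c (Q.map (Tmap_measurable δ c k).aemeasurable) f := by
      refine ⟨hX.1, hX.2.1, ?_, hX.2.2.2⟩
      rw [hcoe, Measure.map_map measurable_snd (Tmap_measurable δ c k), Tmap_snd]
      exact hX.2.2.1
    -- CondMeanEq
    have hCMk : CondMeanEq (Q.map (Tmap_measurable δ c k).aemeasurable) h' := by
      constructor
      · rw [hcoe, integrable_map_measure measurable_fst.aestronglyMeasurable
          (Tmap_measurable δ c k).aemeasurable]
        exact hCM.1.add hψint
      · intro B hB
        have hSm : MeasurableSet {z : ℝ × ℝ | z.2 ∈ B} := measurable_snd hB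
        rw [hcoe]
        rw [setIntegral_map hSm measurable_fst.aestronglyMeasurable
          (Tmap_measurable δ c k).aemeasurable, Tmap_preimage]
        have hsm : AEStronglyMeasurable (fun z : ℝ × ℝ => h' z.2)
            (Measure.map (Tmap δ c k) ρ) := (h'meas.comp measurable_snd).aestronglyMeasurable
        rw [setIntegral_map hSm hsm (Tmap_measurable δ c k).aemeasurable, Tmap_preimage]
        have hL : ∫ z in {z : ℝ × ℝ | z.2 ∈ B}, (Tmap δ c k z).1 ∂ρ
            = ∫ z in {z : ℝ × ℝ | z.2 ∈ B}, z.1 ∂ρ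
              + ∫ z in {z : ℝ × ℝ | z.2 ∈ B}, psi δ c k z.2 ∂ρ := by
          exact integral_add hCM.1.integrableOn hψint.integrableOn
        have hR : ∫ z in {z : ℝ × ℝ | z.2 ∈ B}, h' ((Tmap δ c k z).2) ∂ρ
            = ∫ z in {z : ℝ × ℝ | z.2 ∈ B}, h₀ z.2 ∂ρ
              + ∫ z in {z : ℝ × ℝ | z.2 ∈ B}, psi δ c k z.2 ∂ρ := by
          exact integral_add hint.integrableOn hψint.integrableOn
        rw [hL, hR, hCM₀ B hB]
    -- JumpFun
    have hJk : JumpFun c (fun x => g x + gpsi δ c k x) (gp + δ) gm := by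
      obtain ⟨C, hC⟩ := hJ.1
      refine ⟨⟨C + |δ|, fun x => ?_⟩, fun x hx => (hJ.2.1 x hx).add (gpsi_continuousAt δ c k hx),
        (hJ.2.2.1).add (gpsi_tendsto_right δ c k), ?_⟩
      · exact le_trans (abs_add_le _ _) (add_le_add (hC x) (gpsi_abs_le δ c k x))
      · simpa using (hJ.2.2.2).add (gpsi_tendsto_left δ c k)
    -- derivative condition
    have hDk : ∀ x ∈ interior {x | 0 < f x}, x ≠ c →
        HasDerivAt h' (g x + gpsi δ c k x) x := by
      intro x hx hxc
      have hxU : x ∈ U := by rw [hUint] at hx; exact hx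
      have hsum : HasDerivAt (fun y => h y + psi δ c k y) (g x + gpsi δ c k x) x :=
        (hD x hx hxc).add (psi_hasDerivAt δ c k hxc)
      refine hsum.congr_of_eventuallyEq ?_
      filter_upwards [hVopen.mem_nhds ⟨hxU, hxc⟩] with y hy
      show h₀ y + psi δ c k y = h y + psi δ c k y
      rw [hh₀, Set.indicator_of_mem hy]
    constructor
    · exact ⟨f, hXk, h', hCMk, _, gp + δ, gm, hJk, hDk⟩
    · have := hμ _ f h' _ (gp + δ) gm hXk hCMk hJk hDk
      rw [this, hδ]; ring
  · -- ConvDM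
    intro g0 hg0c ⟨C, hC⟩
    have hconv : ∀ k, ∫ x, g0 x ∂((Q.map (Tmap_measurable δ c k).aemeasurable :
        ProbabilityMeasure (ℝ × ℝ)) : Measure (ℝ × ℝ)) = ∫ z, g0 (Tmap δ c k z) ∂ρ := by
      intro k
      rw [Q.toMeasure_map (Tmap_measurable δ c k).aemeasurable,
        integral_map (Tmap_measurable δ c k).aemeasurable hg0c.aestronglyMeasurable]
    simp only [hconv]
    haveI : IsProbabilityMeasure ρ := Q.2
    refine tendsto_integral_of_dominated_convergence (fun _ => C) ?_ (integrable_const C) ?_ ?_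
    · intro k
      exact (hg0c.comp (Tmap_continuous δ c k)).aestronglyMeasurable
    · intro k
      exact ae_of_all _ fun z => by rw [Real.norm_eq_abs]; exact hC _
    · refine ae_of_all _ fun z => ?_
      have hTz : Tendsto (fun k => Tmap δ c k z) atTop (nhds z) := by
        rw [Prod.tendsto_iff]
        exact ⟨by simpa [Tmap] using (tendsto_const_nhds (x := z.1)).add (psi_tendsto_zero δ c z.2),
          tendsto_const_nhds⟩
      exact (hg0c.tendsto z).comp hTz
  · intro φ hφm hφb hac
    exact tendsto_tpower_of_ascont n δ c Q φ hφm hφb hac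

lemma tpower_mem (n : ℕ) (P : ProbabilityMeasure (ℝ × ℝ)) (φ : (Fin n → ℝ × ℝ) → ℝ)
    (hm : Measurable φ) (hb : ∀ z, φ z ∈ Set.Icc (0:ℝ) 1) :
    tpower n P φ ∈ Set.Icc (0:ℝ) 1 := by
  haveI : IsProbabilityMeasure (sampleDist n P) := by rw [sampleDist]; infer_instance
  constructor
  · exact integral_nonneg fun z => (hb z).1
  · have hint : Integrable φ (sampleDist n P) :=
      integrable_of_bounded hm.aestronglyMeasurable
        (C := 1) (fun z => abs_le.2 ⟨by linarith [(hb z).1], (hb z).2⟩)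
    calc tpower n P φ ≤ ∫ _, (1:ℝ) ∂ sampleDist n P :=
          integral_mono hint (integrable_const 1) fun z => (hb z).2
      _ = 1 := by simp

lemma prob_zero_eq (n : ℕ) (P : ProbabilityMeasure (ℝ × ℝ)) (φ : (Fin n → ℝ × ℝ) → ℝ)
    (hm : Measurable φ) (h01 : ∀ z, φ z = 0 ∨ φ z = 1) :
    ((sampleDist n P) {z | φ z = 0}).toReal = 1 - tpower n P φ := by
  haveI : IsProbabilityMeasure (sampleDist n P) := by rw [sampleDist]; infer_instance
  set s : Set (Fin n → ℝ × ℝ) := {z | φ z = 1} with hs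
  have hsm : MeasurableSet s := hm (measurableSet_singleton 1)
  have hts : {z | φ z = 0} = sᶜ := by
    ext z; rcases h01 z with h | h <;> simp [hs, h]
  have htp : tpower n P φ = ((sampleDist n P) s).toReal := by
    have : ∀ z, φ z = s.indicator (fun _ => (1:ℝ)) z := by
      intro z
      rcases h01 z with h | h
      · rw [h, Set.indicator_of_notMem]; simp [hs, h]
      · rw [h, Set.indicator_of_mem (by exact h)]
    rw [tpower]
    calc ∫ z, φ z ∂ sampleDist n P = ∫ z, s.indicator (fun _ => (1:ℝ)) z ∂ sampleDist n P :=
          integral_congr_ae (ae_of_all _ this)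
      _ = ((sampleDist n P) s).toReal := by rw [integral_indicator_const (1:ℝ) hsm]; simp [Measure.real]
  have hadd := measure_add_measure_compl (μ := sampleDist n P) hsm
  rw [measure_univ] at hadd
  have : ((sampleDist n P) s).toReal + ((sampleDist n P) sᶜ).toReal = 1 := by
    rw [← ENNReal.toReal_add (measure_ne_top _ _) (measure_ne_top _ _), hadd]; simp
  rw [hts, htp]; linarith

/-- Corollary 2, Regression Kink Design: for every `m`, the models with
kink `≠ m` are indistinguishable in the weak distance from those with kink `m`;
consequently (i) a.s. continuous tests on the kink value have power limited by size, and
(ii) confidence sets for the kink obtained by inverting such nonrandomized tests with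
confidence level `1 − α > 0` are unbounded with strictly positive probability under every
`P ∈ 𝒫`. -/
theorem rkd_impossible_inference (n : ℕ) (hn : 1 ≤ n) (c : ℝ)
    (μ : ProbabilityMeasure (ℝ × ℝ) → ℝ)
    (hμ : ∀ (P : ProbabilityMeasure (ℝ × ℝ)) (f h g : ℝ → ℝ) (gp gm : ℝ),
      XCont c P f → CondMeanEq P h → JumpFun c g gp gm →
      (∀ x ∈ interior {x | 0 < f x}, x ≠ c → HasDerivAt h (g x) x) →
      μ P = gp - gm) :
    (∀ (m : ℝ) (Q : ProbabilityMeasure (ℝ × ℝ)), MemRKD c Q → μ Q ≠ m →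
      ∃ P : ℕ → ProbabilityMeasure (ℝ × ℝ),
        (∀ k, MemRKD c (P k) ∧ μ (P k) = m) ∧
        ConvDM (fun k => ((P k) : Measure (ℝ × ℝ))) (Q : Measure (ℝ × ℝ))) ∧
    (∀ (m : ℝ) (φ : (Fin n → ℝ × ℝ) → ℝ), IsTest φ →
      (∀ Q : ProbabilityMeasure (ℝ × ℝ), MemRKD c Q → μ Q ≠ m → ASCont n Q φ) →
      sSup ((fun Q => tpower n Q φ) '' {Q | MemRKD c Q ∧ μ Q ≠ m}) ≤
        sSup ((fun P => tpower n P φ) '' {P | MemRKD c P ∧ μ P = m})) ∧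
    (∀ (φ : ℝ → (Fin n → ℝ × ℝ) → ℝ),
      (∀ m, Measurable (φ m) ∧ ∀ z, φ m z = 0 ∨ φ m z = 1) →
      (∀ m : ℝ, ∀ Q : ProbabilityMeasure (ℝ × ℝ), MemRKD c Q → μ Q ≠ m →
        ASCont n Q (φ m)) →
      ∀ α : ℝ,
        sInf ((fun P => (sampleDist n P {z | φ (μ P) z = 0}).toReal)
          '' {P | MemRKD c P}) = 1 - α →
        0 < 1 - α →
        ∀ P : ProbabilityMeasure (ℝ × ℝ), MemRKD c P →
          0 < sampleDist n P {z | ¬ Bornology.IsBounded {m : ℝ | φ m z = 0}}) := by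
  refine ⟨?_, ?_, ?_⟩
  · -- (i) indistinguishability
    intro m Q hQ _
    obtain ⟨P, h1, h2, _⟩ := master_construction n c m μ hμ Q hQ
    exact ⟨P, h1, h2⟩
  · -- (ii) power bounded by size
    intro m φ hT hAC
    have hbB : BddAbove ((fun P => tpower n P φ) '' {P | MemRKD c P ∧ μ P = m}) := by
      refine ⟨1, ?_⟩
      rintro b ⟨R, hR, rfl⟩
      exact (tpower_mem n R φ hT.1 hT.2).2
    have hBnn : 0 ≤ sSup ((fun P => tpower n P φ) '' {P | MemRKD c P ∧ μ P = m}) := by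
      rcases eq_empty_or_nonempty ((fun P => tpower n P φ) '' {P | MemRKD c P ∧ μ P = m})
        with h | hne
      · rw [h, Real.sSup_empty]
      · obtain ⟨b, hb⟩ := hne
        obtain ⟨R, hR, rfl⟩ := hb
        exact le_trans (tpower_mem n R φ hT.1 hT.2).1 (le_csSup hbB ⟨R, hR, rfl⟩)
    refine Real.sSup_le ?_ hBnn
    rintro a ⟨Q, ⟨hQm, hQne⟩, rfl⟩
    obtain ⟨P, h1, _, h3⟩ := master_construction n c m μ hμ Q hQm
    have hten := h3 φ hT.1
      (fun z => abs_le.2 ⟨by linarith [(hT.2 z).1], (hT.2 z).2⟩) (hAC Q hQm hQne)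
    exact le_of_tendsto hten
      (Filter.Eventually.of_forall fun k => le_csSup hbB ⟨P k, h1 k, rfl⟩)
  · -- (iii) unbounded confidence sets
    intro φ h01 hAC α hcov hα P hP
    haveI : IsProbabilityMeasure (sampleDist n P) := by rw [sampleDist]; infer_instance
    have cover : ∀ R : ProbabilityMeasure (ℝ × ℝ), MemRKD c R →
        1 - α ≤ ((sampleDist n R) {z | φ (μ R) z = 0}).toReal := by
      intro R hR
      rw [← hcov]
      refine csInf_le ⟨0, ?_⟩ ⟨R, hR, rfl⟩
      rintro x ⟨S, _, rfl⟩
      exact ENNReal.toReal_nonneg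
    have key2 : ∀ m' : ℝ, μ P ≠ m' →
        1 - α ≤ ((sampleDist n P) {z | φ m' z = 0}).toReal := by
      intro m' hne
      obtain ⟨Pk, h1, _, h3⟩ := master_construction n c m' μ hμ P hP
      have hb : ∀ z, |φ m' z| ≤ 1 := by
        intro z; rcases (h01 m').2 z with h | h <;> simp [h]
      have hten := h3 (φ m') (h01 m').1 hb (hAC m' P hP hne)
      have heq : ∀ k, ((sampleDist n (Pk k)) {z | φ m' z = 0}).toReal
          = 1 - tpower n (Pk k) (φ m') :=
        fun k => prob_zero_eq n (Pk k) (φ m') (h01 m').1 ((h01 m').2)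
      have heqP : ((sampleDist n P) {z | φ m' z = 0}).toReal = 1 - tpower n P (φ m') :=
        prob_zero_eq n P (φ m') (h01 m').1 ((h01 m').2)
      rw [heqP]
      have hconv : Tendsto (fun k => 1 - tpower n (Pk k) (φ m')) atTop
          (nhds (1 - tpower n P (φ m'))) := tendsto_const_nhds.sub hten
      refine ge_of_tendsto hconv (Filter.Eventually.of_forall fun k => ?_)
      rw [← heq k]
      have hcv := cover (Pk k) (h1 k).1
      rw [(h1 k).2] at hcv
      exact hcv
    set A : ℕ → Set (Fin n → ℝ × ℝ) := fun j => {z | φ (μ P + (j:ℝ) + 1) z = 0} with hA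
    have hAm : ∀ j, MeasurableSet (A j) := fun j => (h01 _).1 (measurableSet_singleton 0)
    have key3 : ∀ j : ℕ, ENNReal.ofReal (1 - α) ≤ (sampleDist n P) (A j) := by
      intro j
      have hne : μ P ≠ μ P + (j:ℝ) + 1 := by
        intro heq
        have : (0:ℝ) ≤ (j:ℝ) := Nat.cast_nonneg j
        linarith
      have := key2 (μ P + (j:ℝ) + 1) hne
      calc ENNReal.ofReal (1 - α) ≤ ENNReal.ofReal (((sampleDist n P) (A j)).toReal) :=
            ENNReal.ofReal_le_ofReal this
        _ = (sampleDist n P) (A j) := ENNReal.ofReal_toReal (measure_ne_top _ _)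
    set V : ℕ → Set (Fin n → ℝ × ℝ) := fun N => ⋃ j, A (N + j) with hV
    have hVm : ∀ N, MeasurableSet (V N) := fun N => MeasurableSet.iUnion fun j => hAm _
    have hanti : Antitone V := by
      intro N M hNM
      refine Set.iUnion_subset fun j => ?_
      have he : M + j = N + (M - N + j) := by omega
      rw [he]
      exact Set.subset_iUnion (fun j => A (N + j)) (M - N + j)
    have hVlb : ∀ N, ENNReal.ofReal (1 - α) ≤ (sampleDist n P) (V N) := by
      intro N
      refine le_trans (key3 N) (measure_mono ?_)
      rw [show N = N + 0 from (Nat.add_zero N).symm]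
      exact Set.subset_iUnion (fun j => A (N + j)) 0
    have htend := tendsto_measure_iInter_atTop (μ := sampleDist n P)
      (fun N => (hVm N).nullMeasurableSet) hanti ⟨0, measure_ne_top _ _⟩
    have hIlb : ENNReal.ofReal (1 - α) ≤ (sampleDist n P) (⋂ N, V N) :=
      ge_of_tendsto htend (Filter.Eventually.of_forall fun N => hVlb N)
    have hsub : (⋂ N, V N) ⊆ {z | ¬ Bornology.IsBounded {m : ℝ | φ m z = 0}} := by
      intro z hz
      simp only [Set.mem_setOf_eq]
      intro hbd
      obtain ⟨C, hC⟩ := isBounded_iff_forall_norm_le.1 hbd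
      set N : ℕ := ⌈C - μ P⌉₊ with hN
      have hzN : z ∈ V N := Set.mem_iInter.1 hz N
      obtain ⟨j, hj⟩ := Set.mem_iUnion.1 hzN
      have hmem : μ P + ((N + j : ℕ) : ℝ) + 1 ∈ {m : ℝ | φ m z = 0} := hj
      have hnorm := hC _ hmem
      rw [Real.norm_eq_abs] at hnorm
      have h1 : μ P + ((N + j : ℕ) : ℝ) + 1 ≤ C := le_trans (le_abs_self _) hnorm
      have h2 : C - μ P ≤ (N : ℝ) := Nat.le_ceil _
      have h3 : (N : ℝ) ≤ ((N + j : ℕ) : ℝ) := by push_cast; linarith [Nat.cast_nonneg (α := ℝ) j]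
      linarith
    calc (0:ENNReal) < ENNReal.ofReal (1 - α) := ENNReal.ofReal_pos.2 hα
      _ ≤ (sampleDist n P) (⋂ N, V N) := hIlb
      _ ≤ sampleDist n P {z | ¬ Bornology.IsBounded {m : ℝ | φ m z = 0}} := measure_mono hsub
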